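/- arXiv:1910.10612 — 2 statements merged into one kernel-verified Lean document; each statement's English description precedes it below -/
import Mathlib

section
/- Let G be a finite simple graph on n vertices having at least one isolated vertex, and suppose that some finite sequence of relative mutations transforms G into a graph isomorphic to G(α,β), where 2α + β = n and β > 0. Then the rank over F_2 of X(G) equals 2α + 2. -/
open Classical Finset

noncomputable section

/-- The mutation `μ_v(G)` of a graph `G` at a vertex `v`: edges not incident to `v`
are those of `G`; edges incident to `v` are the pairs `vw` with `w ≠ v`, `w ∉ N_G(v)`. -/
def mutation {V : Type*} (G : SimpleGraph V) (v : V) : SimpleGraph V where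
  Adj x y := x ≠ y ∧
    ((x = v ∧ ¬ G.Adj v y) ∨ (y = v ∧ ¬ G.Adj v x) ∨ (x ≠ v ∧ y ≠ v ∧ G.Adj x y))
  symm := by
    constructor
    rintro x y ⟨hxy, h | h | ⟨h1, h2, h3⟩⟩
    · exact ⟨hxy.symm, Or.inr (Or.inl h)⟩
    · exact ⟨hxy.symm, Or.inl h⟩
    · exact ⟨hxy.symm, Or.inr (Or.inr ⟨h2, h1, h3.symm⟩)⟩
  loopless := by
    constructor
    rintro x ⟨hxx, -⟩
    exact hxx rfl

/-- The relative mutation `μ_{v←u}(G)` of `G` at `v` with respect to `u`: edges not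
incident to `v` are those of `G`; edges incident to `v` are the pairs `vw` with
`w ≠ v` and `w` in the symmetric difference `N_G(u) Δ N_G(v)`. -/
def relMutation {V : Type*} (G : SimpleGraph V) (v u : V) : SimpleGraph V where
  Adj x y := x ≠ y ∧
    ((x = v ∧ (G.Adj u y ↔ ¬ G.Adj v y)) ∨ (y = v ∧ (G.Adj u x ↔ ¬ G.Adj v x)) ∨
      (x ≠ v ∧ y ≠ v ∧ G.Adj x y))
  symm := by
    constructor
    rintro x y ⟨hxy, h | h | ⟨h1, h2, h3⟩⟩
    · exact ⟨hxy.symm, Or.inr (Or.inl h)⟩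
    · exact ⟨hxy.symm, Or.inl h⟩
    · exact ⟨hxy.symm, Or.inr (Or.inr ⟨h2, h1, h3.symm⟩)⟩
  loopless := by
    constructor
    rintro x ⟨hxx, -⟩
    exact hxx rfl

/-- A vertex is isolated if it has no neighbors. -/
def isIsolated {V : Type*} (G : SimpleGraph V) (v : V) : Prop := ∀ w, ¬ G.Adj v w

/-- `pairGraph a b` is the graph `G(a,b)` on `2a+b` vertices consisting of `a`
pairwise disjoint edges `{0,1}, {2,3}, …` together with `b` isolated vertices. -/
def pairGraph (a b : ℕ) : SimpleGraph (Fin (2 * a + b)) where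
  Adj x y := x ≠ y ∧ (x : ℕ) / 2 = (y : ℕ) / 2 ∧ (x : ℕ) < 2 * a
  symm := by
    constructor
    rintro x y ⟨h1, h2, h3⟩
    exact ⟨h1.symm, h2.symm, by omega⟩
  loopless := by
    constructor
    rintro x ⟨hxx, -⟩
    exact hxx rfl

/-- The adjacency matrix `M(G)` of `G`, over `F_2`. -/
def adjMat {n : ℕ} (G : SimpleGraph (Fin n)) : Matrix (Fin n) (Fin n) (ZMod 2) :=
  fun i j => if G.Adj i j then 1 else 0

/-- The matrix `X(G)` over `F_2`: upper-left `n×n` block is `M(G)`, and the last row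
and column consist entirely of `1`'s except for the `(n+1, n+1)` entry, which is `0`. -/
def Xmat {n : ℕ} (G : SimpleGraph (Fin n)) :
    Matrix (Fin (n + 1)) (Fin (n + 1)) (ZMod 2) :=
  fun i j =>
    if hi : (i : ℕ) < n then
      if hj : (j : ℕ) < n then adjMat G ⟨i, hi⟩ ⟨j, hj⟩ else 1
    else if (j : ℕ) < n then 1 else 0

/-- Finite simple graphs on vertex sets `{1, …, n}`, bundled with `n`. -/
abbrev GraphOn := Σ n : ℕ, SimpleGraph (Fin n)

/-- One move: either pass to an isomorphic graph, or apply a mutation `μ_v`, or apply a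
relative mutation `μ_{v←w}` to a graph containing an isolated vertex `u ∉ {v, w}`. -/
inductive MoveStep : GraphOn → GraphOn → Prop
  | iso {n m : ℕ} (G : SimpleGraph (Fin n)) (H : SimpleGraph (Fin m)) :
      Nonempty (G ≃g H) → MoveStep ⟨n, G⟩ ⟨m, H⟩
  | mut {n : ℕ} (G : SimpleGraph (Fin n)) (v : Fin n) :
      MoveStep ⟨n, G⟩ ⟨n, mutation G v⟩
  | relMut {n : ℕ} (G : SimpleGraph (Fin n)) (v w u : Fin n) :
      v ≠ w → u ≠ v → u ≠ w → isIsolated G u →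
      MoveStep ⟨n, G⟩ ⟨n, relMutation G v w⟩

/-- `G ≈ G'`: `G'` is obtained from `G`, up to graph isomorphism, by a finite
sequence of mutations and relative mutations (the latter in the presence of an
isolated vertex distinct from the two vertices involved). -/
def graphEquiv (A B : GraphOn) : Prop := Relation.ReflTransGen MoveStep A B

/-- The induced subgraph of `G` on `{i, j, k}` has an even number of edges. -/
def evenTriple {V : Type*} (G : SimpleGraph V) (i j k : V) : Prop :=
  Even ((if G.Adj i j then 1 else 0) + (if G.Adj i k then 1 else 0) +
    (if G.Adj j k then 1 else 0) : ℕ)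

/-- `ℓ(G)`: the number of 2-element subsets `{i, j}` (encoded as pairs `i < j`) such
that for every vertex `k ∉ {i, j}` the induced subgraph of `G` on `{i, j, k}` has an
even number of edges. -/
def ell {n : ℕ} (G : SimpleGraph (Fin n)) : ℕ :=
  ((univ : Finset (Fin n × Fin n)).filter
    (fun p => p.1 < p.2 ∧ ∀ k, k ≠ p.1 → k ≠ p.2 → evenTriple G p.1 p.2 k)).card

/-- `J(G)`: the set of 2-element subsets `{i, j}` (encoded as pairs `i < j`) with
`N_G(i) = N_G(j) ≠ ∅`. -/
def Jfinset {n : ℕ} (G : SimpleGraph (Fin n)) : Finset (Fin n × Fin n) :=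
  (univ : Finset (Fin n × Fin n)).filter
    (fun p => p.1 < p.2 ∧ G.neighborSet p.1 = G.neighborSet p.2 ∧
      G.neighborSet p.1 ≠ ∅)

/-- `j(G) = #J(G)`. -/
def jnum {n : ℕ} (G : SimpleGraph (Fin n)) : ℕ := (Jfinset G).card

/-- `i(G)`: the number of isolated vertices of `G`. -/
def numIso {n : ℕ} (G : SimpleGraph (Fin n)) : ℕ :=
  ((univ : Finset (Fin n)).filter (fun v => isIsolated G v)).card

end

noncomputable section Aux

open Matrix

/-- The "sum of coordinates" linear functional. -/
def sumLin (n : ℕ) : (Fin n → ZMod 2) →ₗ[ZMod 2] ZMod 2 :=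
  ∑ i, LinearMap.proj i

lemma sumLin_apply {n : ℕ} (y : Fin n → ZMod 2) : sumLin n y = ∑ i, y i := by
  simp [sumLin]

/-- Extension by zero as a linear map. -/
def extLin (n : ℕ) : (Fin n → ZMod 2) →ₗ[ZMod 2] (Fin (n + 1) → ZMod 2) where
  toFun y := fun i => if h : (i : ℕ) < n then y ⟨i, h⟩ else 0
  map_add' y z := by ext i; by_cases h : (i : ℕ) < n <;> simp [h]
  map_smul' c y := by ext i; by_cases h : (i : ℕ) < n <;> simp [h]

lemma extLin_castSucc {n : ℕ} (z : Fin n → ZMod 2) (j : Fin n) :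
    extLin n z (Fin.castSucc j) = z j := by
  simp [extLin]

lemma extLin_last {n : ℕ} (z : Fin n → ZMod 2) : extLin n z (Fin.last n) = 0 := by
  simp [extLin]

lemma zmod2_add_self (x : ZMod 2) : x + x = 0 := by
  fin_cases x <;> decide

lemma Xmat_cc {n : ℕ} (G : SimpleGraph (Fin n)) (i j : Fin n) :
    Xmat G i.castSucc j.castSucc = adjMat G i j := by
  simp [Xmat]

lemma Xmat_cl {n : ℕ} (G : SimpleGraph (Fin n)) (i : Fin n) :
    Xmat G i.castSucc (Fin.last n) = 1 := by
  simp [Xmat]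

lemma Xmat_lc {n : ℕ} (G : SimpleGraph (Fin n)) (j : Fin n) :
    Xmat G (Fin.last n) j.castSucc = 1 := by
  simp [Xmat]

lemma Xmat_ll {n : ℕ} (G : SimpleGraph (Fin n)) :
    Xmat G (Fin.last n) (Fin.last n) = 0 := by
  simp [Xmat]

lemma Xmat_mulVec_castSucc {n : ℕ} (G : SimpleGraph (Fin n)) (x : Fin (n + 1) → ZMod 2)
    (i : Fin n) :
    (Xmat G *ᵥ x) (Fin.castSucc i) =
      (adjMat G *ᵥ fun j => x (Fin.castSucc j)) i + x (Fin.last n) := by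
  simp [Matrix.mulVec, dotProduct, Fin.sum_univ_castSucc, Xmat_cc, Xmat_cl]

lemma Xmat_mulVec_last {n : ℕ} (G : SimpleGraph (Fin n)) (x : Fin (n + 1) → ZMod 2) :
    (Xmat G *ᵥ x) (Fin.last n) = ∑ j : Fin n, x (Fin.castSucc j) := by
  simp [Matrix.mulVec, dotProduct, Fin.sum_univ_castSucc, Xmat_lc, Xmat_ll]

lemma adjMat_row_isolated {n : ℕ} {G : SimpleGraph (Fin n)} {u0 : Fin n}
    (hu0 : isIsolated G u0) (j : Fin n) : adjMat G u0 j = 0 := by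
  simp [adjMat, hu0 j]

lemma adjMat_mulVec_single {n : ℕ} {G : SimpleGraph (Fin n)} {u0 : Fin n}
    (hu0 : isIsolated G u0) : adjMat G *ᵥ Pi.single u0 (1 : ZMod 2) = 0 := by
  rw [Matrix.mulVec_single]
  funext i
  have : ¬ G.Adj i u0 := fun hadj => hu0 i hadj.symm
  simp [adjMat, this]

lemma mem_ker_Xmat_iff {n : ℕ} (G : SimpleGraph (Fin n)) (u0 : Fin n)
    (hu0 : isIsolated G u0) (x : Fin (n + 1) → ZMod 2) :
    x ∈ LinearMap.ker (Xmat G).mulVecLin ↔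
      (adjMat G *ᵥ fun j => x (Fin.castSucc j)) = 0 ∧
        (∑ j : Fin n, x (Fin.castSucc j)) = 0 ∧ x (Fin.last n) = 0 := by
  rw [LinearMap.mem_ker, Matrix.mulVecLin_apply]
  constructor
  · intro hx
    have h1 : (adjMat G *ᵥ fun j => x (Fin.castSucc j)) u0 = 0 := by
      rw [Matrix.mulVec]
      exact Finset.sum_eq_zero fun j _ => by
        simp only []
        rw [adjMat_row_isolated hu0 j, zero_mul]
    have hlast : x (Fin.last n) = 0 := by
      have h2 := congrFun hx (Fin.castSucc u0)
      rw [Xmat_mulVec_castSucc, h1, zero_add, Pi.zero_apply] at h2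
      exact h2
    have hker : (adjMat G *ᵥ fun j => x (Fin.castSucc j)) = 0 := by
      funext i
      have h2 := congrFun hx (Fin.castSucc i)
      rw [Xmat_mulVec_castSucc, hlast, add_zero, Pi.zero_apply] at h2
      exact h2
    have hsum : (∑ j : Fin n, x (Fin.castSucc j)) = 0 := by
      have h2 := congrFun hx (Fin.last n)
      rw [Xmat_mulVec_last, Pi.zero_apply] at h2
      exact h2
    exact ⟨hker, hsum, hlast⟩
  · rintro ⟨h1, h2, h3⟩
    funext i
    rw [Pi.zero_apply]
    refine Fin.lastCases ?_ (fun j => ?_) i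
    · rw [Xmat_mulVec_last, h2]
    · rw [Xmat_mulVec_castSucc, h3, add_zero, congrFun h1 j, Pi.zero_apply]

lemma adjMat_symm {n : ℕ} (G : SimpleGraph (Fin n)) (i j : Fin n) :
    adjMat G i j = adjMat G j i := by
  simp [adjMat, G.adj_comm]

lemma rank_Xmat {n : ℕ} (G : SimpleGraph (Fin n)) (u0 : Fin n) (hu0 : isIsolated G u0) :
    (Xmat G).rank = (adjMat G).rank + 2 := by
  classical
  set K := LinearMap.ker (adjMat G).mulVecLin with hK
  set KX := LinearMap.ker (Xmat G).mulVecLin with hKX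
  set innr : (Fin n → ZMod 2) →ₗ[ZMod 2] (Fin n → ZMod 2) :=
    LinearMap.id + (sumLin n).smulRight (Pi.single u0 1) with hinnr
  have hinnr_apply : ∀ y : Fin n → ZMod 2,
      innr y = y + (sumLin n y) • (Pi.single u0 1 : Fin n → ZMod 2) := fun y => rfl
  have hsum_single : sumLin n (Pi.single u0 (1 : ZMod 2)) = 1 := by
    rw [sumLin_apply]
    simp [Pi.single_apply]
  set A : K →ₗ[ZMod 2] (Fin (n + 1) → ZMod 2) :=
    (extLin n).comp (innr.comp K.subtype) with hA
  have hA_apply : ∀ y : K, A y = extLin n (innr (y : Fin n → ZMod 2)) := fun y => rfl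
  have hres : ∀ z : Fin n → ZMod 2,
      (fun j => extLin n z (Fin.castSucc j)) = z := fun z => funext fun j => extLin_castSucc z j
  have hAmem : ∀ y : K, A y ∈ KX := by
    intro y
    rw [hKX, mem_ker_Xmat_iff G u0 hu0]
    have hy : adjMat G *ᵥ (y : Fin n → ZMod 2) = 0 := y.2
    refine ⟨?_, ?_, ?_⟩
    · rw [hA_apply, hres, hinnr_apply, Matrix.mulVec_add, Matrix.mulVec_smul,
        adjMat_mulVec_single hu0, smul_zero, add_zero, hy]
    · rw [hA_apply, hres]
      have : (∑ j : Fin n, innr (y : Fin n → ZMod 2) j) = sumLin n (innr (y : Fin n → ZMod 2)) :=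
        (sumLin_apply _).symm
      rw [this, hinnr_apply, map_add, _root_.map_smul, hsum_single, smul_eq_mul, mul_one,
        zmod2_add_self]
    · rw [hA_apply]; exact extLin_last _
  set f : K →ₗ[ZMod 2] KX × ZMod 2 :=
    (LinearMap.codRestrict KX A hAmem).prod ((sumLin n).comp K.subtype) with hf
  have hext_inj : ∀ z : Fin n → ZMod 2, extLin n z = 0 → z = 0 := by
    intro z hz
    funext j
    have := congrFun hz (Fin.castSucc j)
    rw [extLin_castSucc, Pi.zero_apply] at this
    rw [this, Pi.zero_apply]
  have hinj : Function.Injective f := by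
    rw [← LinearMap.ker_eq_bot, LinearMap.ker_eq_bot']
    intro y hy
    have hs : sumLin n (y : Fin n → ZMod 2) = 0 := congrArg Prod.snd hy
    have hA0 : A y = 0 := by
      have := congrArg Prod.fst hy
      exact congrArg Subtype.val this
    rw [hA_apply, hinnr_apply, hs, zero_smul, add_zero] at hA0
    exact Subtype.ext (hext_inj _ hA0)
  have hsurj : Function.Surjective f := by
    rintro ⟨⟨x, hx⟩, t⟩
    rw [hKX, mem_ker_Xmat_iff G u0 hu0] at hx
    obtain ⟨h1, h2, h3⟩ := hx
    set x' : Fin n → ZMod 2 := fun j => x (Fin.castSucc j) with hx'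
    have hyK : adjMat G *ᵥ (x' + t • (Pi.single u0 1 : Fin n → ZMod 2)) = 0 := by
      rw [Matrix.mulVec_add, Matrix.mulVec_smul, h1, adjMat_mulVec_single hu0,
        smul_zero, add_zero]
    have hsumx' : sumLin n x' = 0 := by rw [sumLin_apply]; exact h2
    have hsumy : sumLin n (x' + t • (Pi.single u0 1 : Fin n → ZMod 2)) = t := by
      rw [map_add, _root_.map_smul, hsum_single, hsumx', smul_eq_mul, mul_one, zero_add]
    refine ⟨⟨x' + t • (Pi.single u0 1 : Fin n → ZMod 2), hyK⟩, ?_⟩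
    have hAval : A ⟨x' + t • (Pi.single u0 1 : Fin n → ZMod 2), hyK⟩ = x := by
      rw [hA_apply, hinnr_apply]
      have hcancel : (x' + t • (Pi.single u0 1 : Fin n → ZMod 2)) + sumLin n (x' + t • (Pi.single u0 1 : Fin n → ZMod 2)) •
          (Pi.single u0 1 : Fin n → ZMod 2) = x' := by
        rw [hsumy, add_assoc, ← add_smul, zmod2_add_self, zero_smul, add_zero]
      rw [hcancel]
      funext i
      refine Fin.lastCases ?_ (fun j => ?_) i
      · rw [extLin_last, h3]
      · rw [extLin_castSucc]
    refine Prod.ext ?_ ?_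
    · exact Subtype.ext hAval
    · exact hsumy
  have equiv : K ≃ₗ[ZMod 2] KX × ZMod 2 := LinearEquiv.ofBijective f ⟨hinj, hsurj⟩
  have hdim : Module.finrank (ZMod 2) K = Module.finrank (ZMod 2) KX + 1 := by
    rw [equiv.finrank_eq, Module.finrank_prod, Module.finrank_self]
  have rn1 := LinearMap.finrank_range_add_finrank_ker (Xmat G).mulVecLin
  have rn2 := LinearMap.finrank_range_add_finrank_ker (adjMat G).mulVecLin
  rw [Module.finrank_fintype_fun_eq_card, Fintype.card_fin] at rn1 rn2
  have hrx : (Xmat G).rank =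
      Module.finrank (ZMod 2) (LinearMap.range (Xmat G).mulVecLin) := rfl
  have hrm : (adjMat G).rank =
      Module.finrank (ZMod 2) (LinearMap.range (adjMat G).mulVecLin) := rfl
  rw [← hK] at rn2
  rw [← hKX] at rn1
  omega

lemma adjMat_diag {n : ℕ} (G : SimpleGraph (Fin n)) (i : Fin n) : adjMat G i i = 0 := by
  simp [adjMat]

lemma adjMat_relMutation {n : ℕ} (G : SimpleGraph (Fin n)) (v u : Fin n) (hvu : v ≠ u) :
    adjMat (relMutation G v u) =
      (1 + Matrix.single v u 1) * adjMat G * (1 + Matrix.single v u 1)ᵀ := by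
  have hT : (Matrix.single v u (1 : ZMod 2))ᵀ = Matrix.single u v 1 := by
    ext a b
    simp [Matrix.single, and_comm]
  rw [Matrix.transpose_add, Matrix.transpose_one, hT]
  ext i j
  rcases eq_or_ne v i with rfl | hi
  · rcases eq_or_ne v j with rfl | hj
    · simp only [Matrix.add_mul, Matrix.mul_add, Matrix.one_mul, Matrix.mul_one,
        Matrix.add_apply, Matrix.single_mul_apply_same,
        Matrix.mul_single_apply_same, one_mul, mul_one]
      simp [adjMat_diag, adjMat_symm G u v, zmod2_add_self]
    · by_cases h1 : G.Adj u j <;> by_cases h2 : G.Adj v j <;>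
        simp [Matrix.add_mul, Matrix.mul_add, Matrix.one_mul, Matrix.mul_one,
          Matrix.add_apply, Matrix.single_mul_apply_same,
          Matrix.mul_single_apply_of_ne,
          adjMat, relMutation, hj, Ne.symm hj, h1, h2] <;> decide
  · rcases eq_or_ne v j with rfl | hj
    · by_cases h1 : G.Adj u i <;> by_cases h2 : G.Adj v i <;>
        simp [Matrix.add_mul, Matrix.mul_add, Matrix.one_mul, Matrix.mul_one,
          Matrix.add_apply, Matrix.mul_single_apply_same,
          Matrix.single_mul_apply_of_ne,
          G.adj_comm i v, G.adj_comm i u,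
          adjMat, relMutation, hi, Ne.symm hi, h1, h2] <;> decide
    · simp only [Matrix.add_mul, Matrix.mul_add, Matrix.one_mul, Matrix.mul_one,
        Matrix.add_apply]
      rw [Matrix.single_mul_apply_of_ne _ _ _ _ _ (Ne.symm hi),
        Matrix.mul_single_apply_of_ne _ _ _ _ _ (Ne.symm hj),
        Matrix.mul_single_apply_of_ne _ _ _ _ _ (Ne.symm hj)]
      rw [add_zero, add_zero, add_zero]
      rcases eq_or_ne i j with rfl | hij
      · rw [adjMat_diag, adjMat_diag]
      · simp [adjMat, relMutation, Ne.symm hi, Ne.symm hj, hij]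

lemma rank_adjMat_relMutation {n : ℕ} (G : SimpleGraph (Fin n)) (v u : Fin n) (hvu : v ≠ u) :
    (adjMat (relMutation G v u)).rank = (adjMat G).rank := by
  have hSS : Matrix.single v u (1 : ZMod 2) + Matrix.single v u 1 = 0 := by
    ext a b
    rw [Matrix.add_apply, zmod2_add_self, Matrix.zero_apply]
  have hEE : (1 + Matrix.single v u (1 : ZMod 2)) *
      (1 + Matrix.single v u 1) = 1 := by
    rw [Matrix.mul_add, Matrix.mul_one, Matrix.add_mul, Matrix.one_mul,
      Matrix.single_mul_single_of_ne 1 v u v (Ne.symm hvu) 1, add_zero, add_assoc, hSS,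
      add_zero]
  have hdet : IsUnit (1 + Matrix.single v u (1 : ZMod 2)).det :=
    Matrix.isUnit_det_of_right_inverse hEE
  have hdetT : IsUnit ((1 + Matrix.single v u (1 : ZMod 2))ᵀ).det := by
    rwa [Matrix.det_transpose]
  rw [adjMat_relMutation G v u hvu,
    Matrix.rank_mul_eq_left_of_isUnit_det _ _ hdetT,
    Matrix.rank_mul_eq_right_of_isUnit_det _ _ hdet]

lemma rank_adjMat_foldl {n : ℕ} (l : List (Fin n × Fin n)) (hl : ∀ p ∈ l, p.1 ≠ p.2)
    (G : SimpleGraph (Fin n)) :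
    (adjMat (l.foldl (fun H p => relMutation H p.1 p.2) G)).rank = (adjMat G).rank := by
  induction l generalizing G with
  | nil => rfl
  | cons p l ih =>
      rw [List.foldl_cons, ih (fun q hq => hl q (List.mem_cons_of_mem p hq)),
        rank_adjMat_relMutation G p.1 p.2 (hl p (List.mem_cons_self))]

lemma rank_adjMat_iso {n m : ℕ} {G : SimpleGraph (Fin n)} {H : SimpleGraph (Fin m)}
    (e : G ≃g H) : (adjMat G).rank = (adjMat H).rank := by
  have hGH : adjMat G = (adjMat H).submatrix e.toEquiv e.toEquiv := by
    ext i j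
    simp [adjMat, Matrix.submatrix_apply, e.map_adj_iff]
  rw [hGH, Matrix.rank_submatrix]

def pairFun (a b : ℕ) : Fin (2 * a + b) → Fin (2 * a + b) := fun i =>
  if h : (i : ℕ) < 2 * a then ⟨2 * ((i : ℕ) / 2) + (1 - (i : ℕ) % 2), by omega⟩ else i

lemma pairFun_val_lt (a b : ℕ) (i : Fin (2 * a + b)) (h : (i : ℕ) < 2 * a) :
    (pairFun a b i : ℕ) = 2 * ((i : ℕ) / 2) + (1 - (i : ℕ) % 2) := by
  rw [pairFun, dif_pos h]

lemma pairFun_val_ge (a b : ℕ) (i : Fin (2 * a + b)) (h : ¬ (i : ℕ) < 2 * a) :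
    pairFun a b i = i := dif_neg h

lemma pairFun_involutive (a b : ℕ) : Function.Involutive (pairFun a b) := by
  intro i
  by_cases h : (i : ℕ) < 2 * a
  · have h1 := pairFun_val_lt a b i h
    have h2 : (pairFun a b i : ℕ) < 2 * a := by omega
    have h3 := pairFun_val_lt a b _ h2
    apply Fin.ext
    rw [h3, h1]
    omega
  · rw [pairFun_val_ge a b i h, pairFun_val_ge a b i h]

def pairEquiv (a b : ℕ) : Equiv.Perm (Fin (2 * a + b)) :=
  Function.Involutive.toPerm _ (pairFun_involutive a b)

lemma pairEquiv_apply (a b : ℕ) (i : Fin (2 * a + b)) : pairEquiv a b i = pairFun a b i := rfl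

lemma rank_adjMat_pairGraph (a b : ℕ) : (adjMat (pairGraph a b)).rank = 2 * a := by
  classical
  set w : Fin (2 * a + b) → ZMod 2 := fun i => if (i : ℕ) < 2 * a then 1 else 0 with hwdef
  have hw : ∀ i, w i ≠ 0 ↔ (i : ℕ) < 2 * a := by
    intro i
    rw [hwdef]
    by_cases h : (i : ℕ) < 2 * a <;> simp [h]
  have key : adjMat (pairGraph a b) =
      (Matrix.diagonal w).submatrix (pairEquiv a b) (Equiv.refl _) := by
    ext i j
    rw [Matrix.submatrix_apply, Equiv.refl_apply, pairEquiv_apply]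
    by_cases h : (i : ℕ) < 2 * a
    · have hσ := pairFun_val_lt a b i h
      by_cases hj : (j : ℕ) = 2 * ((i : ℕ) / 2) + (1 - (i : ℕ) % 2)
      · have hσj : pairFun a b i = j := Fin.ext (by rw [hσ, hj])
        have hadj : (pairGraph a b).Adj i j := by
          refine ⟨fun hij => ?_, by omega, h⟩
          rw [hij] at hj
          omega
        have hjlt : (j : ℕ) < 2 * a := by omega
        rw [hσj, Matrix.diagonal_apply_eq]
        simp only [adjMat, if_pos hadj, hwdef]
        rw [if_pos hjlt]
      · have hnadj : ¬ (pairGraph a b).Adj i j := by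
          rintro ⟨h1, h2, h3⟩
          have : (i : ℕ) ≠ (j : ℕ) := fun hv => h1 (Fin.ext hv)
          omega
        have hσj : pairFun a b i ≠ j := fun he => hj (by rw [← he, hσ])
        rw [Matrix.diagonal_apply_ne _ hσj]
        simp [adjMat, hnadj]
    · have hσ : pairFun a b i = i := pairFun_val_ge a b i h
      have hnadj : ¬ (pairGraph a b).Adj i j := by
        rintro ⟨h1, h2, h3⟩
        exact h h3
      rw [hσ]
      rcases eq_or_ne i j with rfl | hij
      · rw [Matrix.diagonal_apply_eq]
        simp only [adjMat, if_neg hnadj, hwdef]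
        rw [if_neg h]
      · rw [Matrix.diagonal_apply_ne _ hij]
        simp [adjMat, hnadj]
  rw [key, Matrix.rank_submatrix, Matrix.rank_diagonal]
  have e : {i : Fin (2 * a + b) // w i ≠ 0} ≃ Fin (2 * a) :=
    { toFun := fun x => ⟨(x.1 : ℕ), (hw x.1).mp x.2⟩
      invFun := fun y => ⟨⟨(y : ℕ), by omega⟩, (hw _).mpr (by simpa using y.isLt)⟩
      left_inv := fun x => Subtype.ext (Fin.ext rfl)
      right_inv := fun y => Fin.ext rfl }
  rw [Fintype.card_congr e, Fintype.card_fin]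

end Aux

/-- if a graph `G` on `n` vertices with an isolated vertex is transformed
by a finite sequence of relative mutations into a graph isomorphic to `G(α, β)` with
`2α + β = n`, `β > 0`, then `rank_{F_2} X(G) = 2α + 2`. -/
theorem stmt_9 {n : ℕ} (G : SimpleGraph (Fin n)) (hiso : ∃ u, isIsolated G u)
    (α β : ℕ) (hn : 2 * α + β = n) (hβ : 0 < β)
    (l : List (Fin n × Fin n)) (hl : ∀ p ∈ l, p.1 ≠ p.2)
    (h : Nonempty ((l.foldl (fun H p => relMutation H p.1 p.2) G) ≃g pairGraph α β)) :
    (Xmat G).rank = 2 * α + 2 := by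
  subst hn
  obtain ⟨u0, hu0⟩ := hiso
  obtain ⟨e⟩ := h
  rw [rank_Xmat G u0 hu0, ← rank_adjMat_foldl l hl G, rank_adjMat_iso e,
    rank_adjMat_pairGraph]
end

section
/- Let G be a finite simple graph containing at least one isolated vertex and assume j(G) > 0. Let {u_1, u_2} ∈ J(G) and let u_2, …, u_m be all the vertices u_i ≠ u_1 with N_G(u_1) = N_G(u_i). Let G' = μ_{u_m←u_1}(⋯ μ_{u_3←u_1}(μ_{u_2←u_1}(G)) ⋯). Then the vertices u_2, …, u_m are isolated in G', the number of isolated vertices satisfies i(G') = i(G) + m − 1, and J(G') = J(G) \ { {u_i, u_j} : 1 ≤ i < j ≤ m }. -/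
open Classical Finset

section Aux

variable {n : ℕ}

/-- Delete all edges incident to vertices satisfying `s`. -/
def delSet (G : SimpleGraph (Fin n)) (s : Fin n → Prop) : SimpleGraph (Fin n) where
  Adj x y := G.Adj x y ∧ ¬ s x ∧ ¬ s y
  symm := ⟨fun x y ⟨h, hx, hy⟩ => ⟨h.symm, hy, hx⟩⟩
  loopless := ⟨fun x ⟨h, _⟩ => h.ne rfl⟩

lemma delSet_adj (G : SimpleGraph (Fin n)) (s : Fin n → Prop) (x y : Fin n) :
    (delSet G s).Adj x y ↔ G.Adj x y ∧ ¬ s x ∧ ¬ s y := Iff.rfl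

lemma relMutation_adj (G : SimpleGraph (Fin n)) (v u x y : Fin n) :
    (relMutation G v u).Adj x y ↔ x ≠ y ∧
    ((x = v ∧ (G.Adj u y ↔ ¬ G.Adj v y)) ∨ (y = v ∧ (G.Adj u x ↔ ¬ G.Adj v x)) ∨
      (x ≠ v ∧ y ≠ v ∧ G.Adj x y)) := Iff.rfl

lemma delSet_congr (G : SimpleGraph (Fin n)) {p q : Fin n → Prop}
    (h : ∀ x, p x ↔ q x) : delSet G p = delSet G q := by
  ext x z
  simp only [delSet_adj]
  have hx := h x; have hz := h z
  tauto

lemma delSet_delSet (G : SimpleGraph (Fin n)) (s t : Fin n → Prop) :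
    delSet (delSet G s) t = delSet G (fun x => s x ∨ t x) := by
  ext x z
  simp only [delSet_adj]
  tauto

lemma relMut_eq_delSet (H : SimpleGraph (Fin n)) (y u : Fin n)
    (h : ∀ w, H.Adj y w ↔ H.Adj u w) :
    relMutation H y u = delSet H (fun x => x = y) := by
  ext x z
  rw [relMutation_adj, delSet_adj]
  constructor
  · rintro ⟨hxz, ⟨hx, hiff⟩ | ⟨hz, hiff⟩ | ⟨hx, hz, hadj⟩⟩
    · have := h z; subst hx; tauto
    · have := h x; subst hz; tauto
    · exact ⟨hadj, hx, hz⟩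
  · rintro ⟨hadj, hx, hz⟩
    exact ⟨hadj.ne, Or.inr (Or.inr ⟨hx, hz, hadj⟩)⟩

lemma fold_delSet (G : SimpleGraph (Fin n)) (u1 : Fin n) (t : List (Fin n)) :
    ∀ (s : Fin n → Prop), t.Nodup → ¬ s u1 →
    (∀ y ∈ t, ¬ s y ∧ y ≠ u1 ∧ ∀ w, G.Adj y w ↔ G.Adj u1 w) →
    t.foldl (fun H y => relMutation H y u1) (delSet G s) =
      delSet G (fun x => s x ∨ x ∈ t) := by
  induction t with
  | nil =>
    intro s _ _ _
    simp only [List.foldl_nil]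
    exact delSet_congr G (fun x => by simp)
  | cons y t ih =>
    intro s hnd hsu hmem
    have hy := hmem y (List.mem_cons_self (a := y) (l := t))
    have h1 : relMutation (delSet G s) y u1 = delSet G (fun x => s x ∨ x = y) := by
      rw [relMut_eq_delSet (delSet G s) y u1 ?_, delSet_delSet]
      intro w
      simp only [delSet_adj]
      have := hy.2.2 w
      have h1 := hy.1
      tauto
    rw [List.foldl_cons, h1,
      ih (fun x => s x ∨ x = y) (List.nodup_cons.mp hnd).2
        (by rintro (h | h); exacts [hsu h, hy.2.1 h.symm])
        (fun z hz => ⟨by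
          rintro (h | h)
          exacts [(hmem z (List.mem_cons_of_mem y hz)).1 h,
            (List.nodup_cons.mp hnd).1 (h ▸ hz)],
          (hmem z (List.mem_cons_of_mem y hz)).2⟩)]
    exact delSet_congr G (fun x => by simp [List.mem_cons]; tauto)

lemma mem_Jfinset_iff {n : ℕ} (H : SimpleGraph (Fin n)) (p : Fin n × Fin n) :
    p ∈ Jfinset H ↔ p.1 < p.2 ∧ (∀ w, H.Adj p.1 w ↔ H.Adj p.2 w) ∧
      ∃ w, H.Adj p.1 w := by
  unfold Jfinset
  simp only [mem_filter, mem_univ, true_and]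
  constructor
  · rintro ⟨h1, h2, h3⟩
    refine ⟨h1, fun w => ?_, ?_⟩
    · rw [← SimpleGraph.mem_neighborSet, ← SimpleGraph.mem_neighborSet, h2]
    · exact Set.nonempty_iff_ne_empty.mpr h3
  · rintro ⟨h1, h2, w, hw⟩
    exact ⟨h1, Set.ext fun z => h2 z, Set.nonempty_iff_ne_empty.mp ⟨w, hw⟩⟩

end Aux

/-- with the setup of Statement 16 (`G'` obtained by relative mutations
`μ_{u_i←u₁}` for `i = 2, …, m`), the vertices `u₂, …, uₘ` are isolated in `G'`,
`i(G') = i(G) + m − 1`, and `J(G') = J(G) \ { {u_i, u_j} : 1 ≤ i < j ≤ m }`. -/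
theorem stmt_17 {n : ℕ} (G : SimpleGraph (Fin n)) (hiso : ∃ u, isIsolated G u)
    (hj : 0 < jnum G) (u1 : Fin n) (l : List (Fin n)) (hl : l ≠ [])
    (hnodup : (u1 :: l).Nodup) (hne : G.neighborSet u1 ≠ ∅)
    (hall : ∀ w : Fin n, w ≠ u1 →
      (G.neighborSet w = G.neighborSet u1 ↔ w ∈ l)) :
    (∀ x ∈ l, isIsolated (l.foldl (fun H y => relMutation H y u1) G) x) ∧
    numIso (l.foldl (fun H y => relMutation H y u1) G) = numIso G + l.length ∧
    (∀ p : Fin n × Fin n,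
      p ∈ Jfinset (l.foldl (fun H y => relMutation H y u1) G) ↔
        p ∈ Jfinset G ∧ ¬(p.1 ∈ u1 :: l ∧ p.2 ∈ u1 :: l)) := by
  classical
  have hu1l : u1 ∉ l := (List.nodup_cons.mp hnodup).1
  have hlnd : l.Nodup := (List.nodup_cons.mp hnodup).2
  have hmeml : ∀ y ∈ l, y ≠ u1 ∧ ∀ w, G.Adj y w ↔ G.Adj u1 w := by
    intro y hy
    have hyne : y ≠ u1 := fun h => hu1l (h ▸ hy)
    refine ⟨hyne, fun w => ?_⟩
    have hEq := (hall y hyne).mpr hy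
    exact ⟨fun h => (Set.ext_iff.mp hEq w).mp h, fun h => (Set.ext_iff.mp hEq w).mpr h⟩
  -- the fold equals deleting all edges at vertices of `l`
  have hfold : l.foldl (fun H y => relMutation H y u1) G = delSet G (fun x => x ∈ l) := by
    have h1 := fold_delSet G u1 l (fun _ => False) hlnd not_false
      (fun y hy => ⟨not_false, (hmeml y hy).1, (hmeml y hy).2⟩)
    have h2 : delSet G (fun _ => False) = G := by
      ext x z; simp [delSet_adj]
    have h3 : delSet G (fun x => False ∨ x ∈ l) = delSet G (fun x => x ∈ l) :=
      delSet_congr G (fun x => by tauto)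
    rw [h2, h3] at h1
    exact h1
  rw [hfold]
  obtain ⟨w0, hw0⟩ : (G.neighborSet u1).Nonempty := Set.nonempty_iff_ne_empty.mpr hne
  have hw0' : G.Adj u1 w0 := hw0
  have hnotiso : ∀ y ∈ l, ¬ isIsolated G y := fun y hy h =>
    h w0 (((hmeml y hy).2 w0).mpr hw0')
  have hiso_iff : ∀ v, isIsolated (delSet G (fun x => x ∈ l)) v ↔
      (v ∈ l ∨ isIsolated G v) := by
    intro v
    constructor
    · intro h
      by_cases hv : v ∈ l
      · exact Or.inl hv
      · refine Or.inr (fun w hadj => ?_)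
        by_cases hw : w ∈ l
        · have h2 : G.Adj u1 v := ((hmeml w hw).2 v).mp hadj.symm
          exact h u1 ((delSet_adj ..).mpr ⟨h2.symm, hv, hu1l⟩)
        · exact h w ((delSet_adj ..).mpr ⟨hadj, hv, hw⟩)
    · rintro (hv | hv) w hadj
      · exact ((delSet_adj ..).mp hadj).2.1 hv
      · exact hv w ((delSet_adj ..).mp hadj).1
  refine ⟨?_, ?_, ?_⟩
  · intro x hx w hadj
    exact ((delSet_adj ..).mp hadj).2.1 hx
  · unfold numIso
    have hset : ((univ : Finset (Fin n)).filter
          (fun v => isIsolated (delSet G (fun x => x ∈ l)) v)) =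
        ((univ : Finset (Fin n)).filter (fun v => isIsolated G v)) ∪ l.toFinset := by
      ext v
      simp only [mem_filter, mem_univ, true_and, mem_union, List.mem_toFinset,
        hiso_iff v]
      tauto
    rw [hset, card_union_of_disjoint, List.toFinset_card_of_nodup hlnd]
    rw [Finset.disjoint_left]
    intro v hv hv'
    exact hnotiso v (List.mem_toFinset.mp hv') (Finset.mem_filter.mp hv).2
  · rintro ⟨i, j⟩
    rw [mem_Jfinset_iff, mem_Jfinset_iff]
    simp only [delSet_adj]
    constructor
    · rintro ⟨hij, heq, w1, hw1⟩
      have hil : i ∉ l := hw1.2.1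
      have hwl : w1 ∉ l := hw1.2.2
      have hjl : j ∉ l := ((heq w1).mp hw1).2.1
      refine ⟨⟨hij, fun w => ?_, ⟨w1, hw1.1⟩⟩, ?_⟩
      · by_cases hw : w ∈ l
        · have a1 : G.Adj i w ↔ G.Adj u1 i := (G.adj_comm i w).trans ((hmeml w hw).2 i)
          have a2 : G.Adj j w ↔ G.Adj u1 j := (G.adj_comm j w).trans ((hmeml w hw).2 j)
          have a3 : G.Adj i u1 ↔ G.Adj j u1 :=
            ⟨fun h => ((heq u1).mp ⟨h, hil, hu1l⟩).1,
             fun h => ((heq u1).mpr ⟨h, hjl, hu1l⟩).1⟩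
          rw [a1, a2, G.adj_comm u1 i, G.adj_comm u1 j]
          exact a3
        · exact ⟨fun h => ((heq w).mp ⟨h, hil, hw⟩).1,
            fun h => ((heq w).mpr ⟨h, hjl, hw⟩).1⟩
      · rintro ⟨hic, hjc⟩
        rcases List.mem_cons.mp hic with h1 | h1
        · rcases List.mem_cons.mp hjc with h2 | h2
          · exact hij.ne (h1.trans h2.symm)
          · exact hjl h2
        · exact hil h1
    · rintro ⟨⟨hij, heq, w1, hw1⟩, hnb⟩
      have hNcons : ∀ v ∈ u1 :: l, ∀ w, G.Adj v w ↔ G.Adj u1 w := by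
        intro v hv w
        rcases List.mem_cons.mp hv with rfl | hv
        · exact Iff.rfl
        · exact (hmeml v hv).2 w
      have hboth : ∀ v w : Fin n, v ∈ u1 :: l → (∀ z, G.Adj v z ↔ G.Adj w z) →
          w ∈ u1 :: l := by
        intro v w hv hvw
        by_cases hwu : w = u1
        · exact hwu ▸ List.mem_cons_self (a := u1) (l := l)
        · exact List.mem_cons_of_mem _ ((hall w hwu).mp
            (Set.ext fun z => (hvw z).symm.trans (hNcons v hv z)))
      have hic : i ∉ u1 :: l := fun hi => hnb ⟨hi, hboth i j hi heq⟩
      have hjc : j ∉ u1 :: l := fun hj =>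
        hnb ⟨hboth j i hj (fun z => (heq z).symm), hj⟩
      have hil : i ∉ l := fun h => hic (List.mem_cons_of_mem _ h)
      have hjl : j ∉ l := fun h => hjc (List.mem_cons_of_mem _ h)
      refine ⟨hij, fun w => ?_, ?_⟩
      · exact ⟨fun ⟨h, _, hw⟩ => ⟨(heq w).mp h, hjl, hw⟩,
          fun ⟨h, _, hw⟩ => ⟨(heq w).mpr h, hil, hw⟩⟩
      · by_cases hw : w1 ∈ l
        · exact ⟨u1, (((hmeml w1 hw).2 i).mp hw1.symm).symm, hil, hu1l⟩
        · exact ⟨w1, hw1, hil, hw⟩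
end
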